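/- Let m ∈ {14, 15} and let S be a 5-progression-free subset of F_5^2 with |S| = m. Then the number of affine lines ℓ of F_5^2 with |ℓ ∩ S| = 4 is at most m. -/
import Mathlib

/-- A subset `S` of `F_p^n` is `k`-progression-free if there are no `a, d` with `d ≠ 0`
such that `a + i • d ∈ S` for all `i ∈ {0, …, k-1}`. -/
def ProgFree (p n k : ℕ) (S : Finset (Fin n → ZMod p)) : Prop :=
  ¬ ∃ a d : Fin n → ZMod p, d ≠ 0 ∧ ∀ i : ℕ, i < k → a + (i : ZMod p) • d ∈ S

/-- An affine line of `F_5^2`, as a finite set of points. -/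
def IsLine (L : Finset (Fin 2 → ZMod 5)) : Prop :=
  ∃ a d : Fin 2 → ZMod 5, d ≠ 0 ∧
    L = Finset.image (fun t : ZMod 5 => a + t • d) Finset.univ

open Finset

set_option maxRecDepth 100000
set_option maxHeartbeats 4000000

instance : Fact (Nat.Prime 5) := ⟨by norm_num⟩

abbrev Pt := Fin 2 → ZMod 5

def lineF (a d : Pt) : Finset Pt := Finset.image (fun t : ZMod 5 => a + t • d) univ

def lines30 : Finset (Finset Pt) :=
  (univ : Finset (ZMod 5 × Option (ZMod 5))).image (fun q =>
    match q.2 with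
    | some k => lineF ![0, q.1] ![1, k]
    | none => lineF ![q.1, 0] ![0, 1])

lemma lineF_smul (a d : Pt) (c : ZMod 5) (hc : c ≠ 0) : lineF a (c • d) = lineF a d := by
  unfold lineF
  ext x
  simp only [mem_image, mem_univ, true_and]
  constructor
  · rintro ⟨t, rfl⟩
    exact ⟨t * c, by rw [smul_smul]⟩
  · rintro ⟨t, rfl⟩
    refine ⟨t * c⁻¹, ?_⟩
    rw [smul_smul, mul_assoc, inv_mul_cancel₀ hc, mul_one]

lemma lineF_shift (a d : Pt) (s : ZMod 5) : lineF (a + s • d) d = lineF a d := by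
  unfold lineF
  ext x
  simp only [mem_image, mem_univ, true_and]
  constructor
  · rintro ⟨t, rfl⟩
    exact ⟨s + t, by rw [add_smul, add_assoc]⟩
  · rintro ⟨t, rfl⟩
    refine ⟨t - s, ?_⟩
    rw [sub_smul]
    abel

lemma lineF_mem (a d : Pt) (hd : d ≠ 0) : lineF a d ∈ lines30 := by
  by_cases h0 : d 0 = 0
  · have h1 : d 1 ≠ 0 := by
      intro h1
      apply hd
      funext i
      fin_cases i <;> simp [h0, h1]
    have hd' : d = (d 1) • ![0, 1] := by
      funext i
      fin_cases i <;> simp [h0]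
    have e1 : lineF a d = lineF a ![0, 1] := by
      rw [hd', lineF_smul a _ _ h1]
    have e2 : a + (-(a 1)) • ![0, 1] = (![a 0, 0] : Pt) := by
      funext i
      fin_cases i <;> simp
    have e3 : lineF a ![0, 1] = lineF ![a 0, 0] ![0, 1] := by
      rw [← e2, lineF_shift]
    rw [e1, e3]
    exact Finset.mem_image.2 ⟨(a 0, none), mem_univ _, rfl⟩
  · set k : ZMod 5 := (d 0)⁻¹ * d 1 with hk
    have hd' : d = (d 0) • ![1, k] := by
      funext i
      fin_cases i <;> simp [hk]
      rw [← mul_assoc, mul_inv_cancel₀ h0, one_mul]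
    have e1 : lineF a d = lineF a ![1, k] := by
      rw [hd', lineF_smul a _ _ h0]
    have e2 : a + (-(a 0)) • ![1, k] = (![0, a 1 - a 0 * k] : Pt) := by
      funext i
      fin_cases i <;> simp <;> ring
    have e3 : lineF a ![1, k] = lineF ![0, a 1 - a 0 * k] ![1, k] := by
      rw [← e2, lineF_shift]
    rw [e1, e3]
    exact Finset.mem_image.2 ⟨(a 1 - a 0 * k, some k), mem_univ _, rfl⟩

lemma lines30_line {L : Finset Pt} (hL : L ∈ lines30) :
    ∃ a d : Pt, d ≠ 0 ∧ L = lineF a d := by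
  obtain ⟨⟨b, k⟩, -, rfl⟩ := Finset.mem_image.1 hL
  cases k with
  | none =>
      exact ⟨![b, 0], ![0, 1], by intro h; simpa using congrFun h 1, rfl⟩
  | some k =>
      exact ⟨![0, b], ![1, k], by intro h; simpa using congrFun h 0, rfl⟩

lemma isLine_iff (L : Finset Pt) : IsLine L ↔ L ∈ lines30 := by
  constructor
  · rintro ⟨a, d, hd, rfl⟩
    exact lineF_mem a d hd
  · intro hL
    obtain ⟨a, d, hd, rfl⟩ := lines30_line hL
    exact ⟨a, d, hd, rfl⟩

lemma hP2 : ∀ x y : Pt,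
    (lines30.filter (fun L => x ∈ L ∧ y ∈ L)).card = if x = y then 6 else 1 := by decide

lemma hP1 : ∀ x : Pt, (lines30.filter (fun L => x ∈ L)).card = 6 := by decide

lemma hcard30 : lines30.card = 30 := by decide

theorem stmt_10 (m : ℕ) (hm : m = 14 ∨ m = 15)
    (S : Finset (Fin 2 → ZMod 5)) (hS : ProgFree 5 2 5 S) (hcard : S.card = m) :
    {L : Finset (Fin 2 → ZMod 5) | IsLine L ∧ (L ∩ S).card = 4}.ncard ≤ m := by
  classical
  set N := (lines30.filter (fun L => (L ∩ S).card = 4)).card with hN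
  have hset : {L : Finset (Fin 2 → ZMod 5) | IsLine L ∧ (L ∩ S).card = 4}
      = ↑(lines30.filter (fun L => (L ∩ S).card = 4)) := by
    ext L
    simp only [Set.mem_setOf_eq, Finset.coe_filter, isLine_iff]
  rw [hset, Set.ncard_coe_finset, ← hN]
  -- rewrite card of intersection as a sum
  have hrs : ∀ L : Finset Pt, (L ∩ S).card = ∑ x ∈ S, if x ∈ L then 1 else 0 := by
    intro L
    have : L ∩ S = S.filter (· ∈ L) := by
      ext x; simp [Finset.mem_inter, Finset.mem_filter, and_comm]
    rw [this, Finset.card_filter]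
  -- identity B
  have hB : ∑ L ∈ lines30, (L ∩ S).card = 6 * m := by
    calc ∑ L ∈ lines30, (L ∩ S).card
        = ∑ L ∈ lines30, ∑ x ∈ S, if x ∈ L then 1 else 0 := by
          exact Finset.sum_congr rfl fun L _ => hrs L
      _ = ∑ x ∈ S, ∑ L ∈ lines30, if x ∈ L then 1 else 0 := Finset.sum_comm
      _ = ∑ x ∈ S, 6 := by
          refine Finset.sum_congr rfl fun x _ => ?_
          rw [← Finset.card_filter]
          exact hP1 x
      _ = 6 * m := by rw [Finset.sum_const, hcard, smul_eq_mul, mul_comm]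
  -- identity C
  have hC : ∑ L ∈ lines30, (L ∩ S).card * (L ∩ S).card = m * (5 + m) := by
    calc ∑ L ∈ lines30, (L ∩ S).card * (L ∩ S).card
        = ∑ L ∈ lines30, ∑ x ∈ S, ∑ y ∈ S, if x ∈ L ∧ y ∈ L then 1 else 0 := by
          refine Finset.sum_congr rfl fun L _ => ?_
          rw [hrs L, Finset.sum_mul_sum]
          refine Finset.sum_congr rfl fun x _ => Finset.sum_congr rfl fun y _ => ?_
          split_ifs with h1 h2 h3 <;> simp_all
      _ = ∑ x ∈ S, ∑ y ∈ S, ∑ L ∈ lines30, if x ∈ L ∧ y ∈ L then 1 else 0 := by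
          rw [Finset.sum_comm]
          exact Finset.sum_congr rfl fun x _ => Finset.sum_comm
      _ = ∑ x ∈ S, ∑ y ∈ S, if x = y then 6 else 1 := by
          refine Finset.sum_congr rfl fun x _ => Finset.sum_congr rfl fun y _ => ?_
          rw [← Finset.card_filter]
          exact hP2 x y
      _ = m * (5 + m) := by
          have : ∀ x ∈ S, (∑ y ∈ S, if x = y then 6 else 1) = 5 + m := by
            intro x hx
            have : ∀ y ∈ S, (if x = y then 6 else 1) = (if x = y then 5 else 0) + 1 := by
              intro y _; split_ifs <;> rfl
            rw [Finset.sum_congr rfl this, Finset.sum_add_distrib,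
              Finset.sum_ite_eq S x (fun _ => 5), if_pos hx, Finset.sum_const, hcard,
              smul_eq_mul, mul_one]
          rw [Finset.sum_congr rfl this, Finset.sum_const, hcard, smul_eq_mul]
  -- no line meets S in 5 points
  have hD : ∀ L ∈ lines30, (L ∩ S).card ≤ 4 := by
    intro L hL
    by_contra hcon
    push_neg at hcon
    obtain ⟨a, d, hd, rfl⟩ := lines30_line hL
    have hL5 : (lineF a d).card ≤ 5 := by
      refine le_trans (Finset.card_image_le) ?_
      rw [Finset.card_univ, ZMod.card]
    have heq : lineF a d ∩ S = lineF a d :=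
      Finset.eq_of_subset_of_card_le Finset.inter_subset_left (le_trans hL5 hcon)
    have hsub : lineF a d ⊆ S := by
      rw [← heq]; exact Finset.inter_subset_right
    exact hS ⟨a, d, hd, fun i _ =>
      hsub (Finset.mem_image.2 ⟨(i : ZMod 5), mem_univ _, rfl⟩)⟩
  -- pointwise inequality
  have hpt : ∀ L ∈ lines30,
      5 * (L ∩ S).card + (if (L ∩ S).card = 4 then 2 else 0)
        ≤ (L ∩ S).card * (L ∩ S).card + 6 := by
    intro L hL
    have h4 := hD L hL
    set r := (L ∩ S).card with hr
    interval_cases r <;> norm_num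
  have hsum := Finset.sum_le_sum hpt
  rw [Finset.sum_add_distrib, ← Finset.mul_sum, hB, Finset.sum_add_distrib, hC,
    Finset.sum_const, hcard30, Finset.sum_ite, Finset.sum_const, Finset.sum_const_zero,
    add_zero] at hsum
  have hkey : 5 * (6 * m) + N * 2 ≤ m * (5 + m) + 30 * 6 := by
    simpa [hN] using hsum
  rcases hm with rfl | rfl <;> omega
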